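/- Assume g satisfies condition (H1a). Let (y_n) be a sequence in ℝ with y_n ≤ y₀ for all n and y_n → y₀, and let (z_n) be a sequence in ℝ^d with z_n → z₀. Then g_n(y_n, z_n) → g(y₀, z₀) as n → ∞. -/

import Mathlib

open Filter Topology

/-- The embedding of a rational vector into `ℝ^d` (with the Euclidean norm). -/
noncomputable def qcast (d : ℕ) (v : Fin d → ℚ) : EuclideanSpace ℝ (Fin d) :=
  (WithLp.equiv 2 (Fin d → ℝ)).symm fun i => (v i : ℝ)

set_option maxHeartbeats 1000000

lemma rpow_subadd {a b α : ℝ} (ha : 0 ≤ a) (hb : 0 ≤ b) (h0 : 0 ≤ α) (h1 : α ≤ 1) :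
    (a + b) ^ α ≤ a ^ α + b ^ α := by
  have h := NNReal.rpow_add_le_add_rpow a.toNNReal b.toNNReal h0 h1
  have h2 := NNReal.coe_le_coe.mpr h
  push_cast at h2
  rwa [Real.coe_toNNReal a ha, Real.coe_toNNReal b hb] at h2

lemma qdense (d : ℕ) (z : EuclideanSpace ℝ (Fin d)) {ε : ℝ} (hε : 0 < ε) :
    ∃ v : Fin d → ℚ, ‖z - qcast d v‖ < ε := by
  have hδ : (0:ℝ) < ε / (d + 1) := by positivity
  choose v hv using fun i : Fin d => exists_rat_near (z i) hδ
  refine ⟨v, ?_⟩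
  rw [EuclideanSpace.norm_eq, Real.sqrt_lt' hε]
  have key : ∀ i : Fin d, ‖(z - qcast d v) i‖ ^ 2 ≤ (ε / (d+1))^2 := by
    intro i
    have : (z - qcast d v) i = z i - (v i : ℝ) := by
      simp [qcast]
    rw [this, Real.norm_eq_abs, sq_abs, ← sq_abs]
    exact pow_le_pow_left₀ (abs_nonneg _) (le_of_lt (hv i)) 2
  calc ∑ i, ‖(z - qcast d v) i‖ ^ 2 ≤ ∑ _i : Fin d, (ε / (d+1))^2 :=
        Finset.sum_le_sum fun i _ => key i
    _ = d * (ε / (d+1))^2 := by simp [Finset.sum_const, Finset.card_univ]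
    _ < ε ^ 2 := by
        rw [div_pow, ← mul_div_assoc, div_lt_iff₀ (by positivity)]
        nlinarith [pow_pos hε 2, mul_nonneg (mul_nonneg (Nat.cast_nonneg (α := ℝ) d) (Nat.cast_nonneg (α := ℝ) d)) (sq_nonneg ε), mul_nonneg (Nat.cast_nonneg (α := ℝ) d) (sq_nonneg ε)]

lemma term_ge (d : ℕ) {C α f : ℝ} (hC : 0 < C) (hα0 : 0 < α) (hα1 : α ≤ 1)
    (g : ℝ → EuclideanSpace ℝ (Fin d) → ℝ)
    (H5 : ∀ y z, |g y z| ≤ f + C * (|y| + ‖z‖ ^ α))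
    (n : ℕ) (y : ℝ) (z : EuclideanSpace ℝ (Fin d)) (p : ℚ × (Fin d → ℚ)) :
    -(f + C * (|y| + ‖z‖ ^ α)) + ((n : ℝ) - 1) * C * (|y - (p.1 : ℝ)| + ‖z - qcast d p.2‖ ^ α)
      ≤ g (p.1 : ℝ) (qcast d p.2)
        + (n : ℝ) * C * (|y - (p.1 : ℝ)| + ‖z - qcast d p.2‖ ^ α) := by
  set u := (p.1 : ℝ) with hu
  set w := qcast d p.2 with hww
  have h1 : -(f + C * (|u| + ‖w‖ ^ α)) ≤ g u w := neg_le_of_abs_le (H5 u w)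
  have h2 : |u| ≤ |y - u| + |y| := by
    have := abs_add_le (u - y) y
    rw [sub_add_cancel] at this
    rwa [abs_sub_comm y u]
  have h3 : ‖w‖ ^ α ≤ ‖z‖ ^ α + ‖z - w‖ ^ α := by
    have hw : ‖w‖ ≤ ‖z‖ + ‖z - w‖ := by
      have := norm_sub_le z (z - w)
      rwa [sub_sub_cancel] at this
    calc ‖w‖ ^ α ≤ (‖z‖ + ‖z - w‖) ^ α := Real.rpow_le_rpow (norm_nonneg _) hw hα0.le
      _ ≤ _ := rpow_subadd (norm_nonneg _) (norm_nonneg _) hα0.le hα1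
  nlinarith [h1, mul_le_mul_of_nonneg_left h2 hC.le, mul_le_mul_of_nonneg_left h3 hC.le,
    abs_nonneg (y - u), Real.rpow_nonneg (norm_nonneg (z - w)) α,
    mul_nonneg hC.le (abs_nonneg (y - u)),
    mul_nonneg hC.le (Real.rpow_nonneg (norm_nonneg (z - w)) α)]

lemma lsc_at (d : ℕ) {C α f : ℝ} (hC : 0 < C) (hα0 : 0 < α)
    (g : ℝ → EuclideanSpace ℝ (Fin d) → ℝ)
    (H5 : ∀ y z, |g y z| ≤ f + C * (|y| + ‖z‖ ^ α))
    (y₀ : ℝ) (z₀ : EuclideanSpace ℝ (Fin d))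
    (H1a_i : Tendsto (fun p : ℝ × EuclideanSpace ℝ (Fin d) => g p.1 p.2)
        (𝓝[{p : ℝ × EuclideanSpace ℝ (Fin d) | p.1 ≤ y₀}] (y₀, z₀)) (𝓝 (g y₀ z₀)))
    (H1a_ii : g y₀ z₀ ≤ Filter.liminf (fun p : ℝ × EuclideanSpace ℝ (Fin d) => g p.1 p.2)
        (𝓝[{p : ℝ × EuclideanSpace ℝ (Fin d) | y₀ ≤ p.1}] (y₀, z₀)))
    {ε : ℝ} (hε : 0 < ε) :
    ∃ δ > 0, ∀ p : ℝ × EuclideanSpace ℝ (Fin d),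
      dist p (y₀, z₀) < δ → g y₀ z₀ - ε < g p.1 p.2 := by
  set s := {p : ℝ × EuclideanSpace ℝ (Fin d) | p.1 ≤ y₀} with hs
  set t := {p : ℝ × EuclideanSpace ℝ (Fin d) | y₀ ≤ p.1} with ht
  have hst : s ∪ t = Set.univ := by
    ext p; simp only [Set.mem_union, Set.mem_setOf_eq, Set.mem_univ, iff_true, hs, ht]
    exact le_total p.1 y₀
  have ev1 : ∀ᶠ p in 𝓝[s] ((y₀, z₀) : ℝ × EuclideanSpace ℝ (Fin d)),
      g y₀ z₀ - ε < g p.1 p.2 :=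
    H1a_i.eventually (eventually_gt_nhds (sub_lt_self _ hε))
  have hne : (𝓝[t] ((y₀, z₀) : ℝ × EuclideanSpace ℝ (Fin d))).NeBot :=
    nhdsWithin_neBot_of_mem (by simp [ht])
  have hbdd : (𝓝[t] ((y₀, z₀) : ℝ × EuclideanSpace ℝ (Fin d))).IsBoundedUnder (· ≥ ·)
      (fun p : ℝ × EuclideanSpace ℝ (Fin d) => g p.1 p.2) := by
    refine ⟨-(f + C * ((|y₀| + 1) + (‖z₀‖ + 1) ^ α)), ?_⟩
    rw [Filter.eventually_map]
    refine Filter.eventually_of_mem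
      (nhdsWithin_le_nhds (Metric.ball_mem_nhds _ one_pos)) (fun p hp => ?_)
    rw [Metric.mem_ball, Prod.dist_eq, max_lt_iff] at hp
    have h1 : |p.1| ≤ |y₀| + 1 := by
      have := abs_add_le (p.1 - y₀) y₀
      rw [sub_add_cancel] at this
      have h2 : |p.1 - y₀| ≤ 1 := le_of_lt (by rw [← Real.dist_eq]; exact hp.1)
      linarith
    have h2 : ‖p.2‖ ^ α ≤ (‖z₀‖ + 1) ^ α := by
      apply Real.rpow_le_rpow (norm_nonneg _) _ hα0.le
      have := norm_add_le (p.2 - z₀) z₀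
      rw [sub_add_cancel] at this
      have := hp.2
      rw [dist_eq_norm] at this
      linarith
    have := neg_le_of_abs_le (H5 p.1 p.2)
    have hmono : f + C * (|p.1| + ‖p.2‖ ^ α) ≤ f + C * ((|y₀| + 1) + (‖z₀‖ + 1) ^ α) := by
      have := mul_le_mul_of_nonneg_left (add_le_add h1 h2) hC.le
      linarith
    simp only [ge_iff_le]
    linarith
  have ev2 : ∀ᶠ p in 𝓝[t] ((y₀, z₀) : ℝ × EuclideanSpace ℝ (Fin d)),
      g y₀ z₀ - ε < g p.1 p.2 :=
    eventually_lt_of_lt_liminf (lt_of_lt_of_le (sub_lt_self _ hε) H1a_ii) hbdd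
  have hall : ∀ᶠ p in 𝓝 ((y₀, z₀) : ℝ × EuclideanSpace ℝ (Fin d)),
      g y₀ z₀ - ε < g p.1 p.2 := by
    rw [← nhdsWithin_univ, ← hst, nhdsWithin_union, Filter.eventually_sup]
    exact ⟨ev1, ev2⟩
  rcases Metric.eventually_nhds_iff.mp hall with ⟨δ, hδ, h⟩
  exact ⟨δ, hδ, fun p hp => h hp⟩

/-- The rational inf-convolution
`g_n(y,z) := inf_{(u,v) ∈ ℚ × ℚ^d} ( g(u,v) + n·C·(|y − u| + ‖z − v‖^α) )`. -/
noncomputable def gq (d : ℕ) (C α : ℝ) (g : ℝ → EuclideanSpace ℝ (Fin d) → ℝ)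
    (n : ℕ) (y : ℝ) (z : EuclideanSpace ℝ (Fin d)) : ℝ :=
  ⨅ p : ℚ × (Fin d → ℚ),
    (g (p.1 : ℝ) (qcast d p.2) + (n : ℝ) * C * (|y - (p.1 : ℝ)| + ‖z - qcast d p.2‖ ^ α))

/-- Assume (H5) and (H1a). If `y_n ≤ y₀` for all `n`, `y_n → y₀` and
`z_n → z₀`, then `g_n(y_n, z_n) → g(y₀, z₀)` as `n → ∞`. -/

theorem stmt_10 (d : ℕ) (hd : 1 ≤ d) (C α f : ℝ) (hC : 0 < C)
    (hα : 0 < α ∧ α < 1) (hf : 0 ≤ f)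
    (g : ℝ → EuclideanSpace ℝ (Fin d) → ℝ)
    (H5 : ∀ (y : ℝ) (z : EuclideanSpace ℝ (Fin d)),
      |g y z| ≤ f + C * (|y| + ‖z‖ ^ α))
    (H1a_i : ∀ (y₀ : ℝ) (z₀ : EuclideanSpace ℝ (Fin d)),
      Tendsto (fun p : ℝ × EuclideanSpace ℝ (Fin d) => g p.1 p.2)
        (𝓝[{p : ℝ × EuclideanSpace ℝ (Fin d) | p.1 ≤ y₀}] (y₀, z₀)) (𝓝 (g y₀ z₀)))
    (H1a_ii : ∀ (y₀ : ℝ) (z₀ : EuclideanSpace ℝ (Fin d)),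
      g y₀ z₀ ≤ Filter.liminf (fun p : ℝ × EuclideanSpace ℝ (Fin d) => g p.1 p.2)
        (𝓝[{p : ℝ × EuclideanSpace ℝ (Fin d) | y₀ ≤ p.1}] (y₀, z₀)))
    (yseq : ℕ → ℝ) (zseq : ℕ → EuclideanSpace ℝ (Fin d))
    (y₀ : ℝ) (z₀ : EuclideanSpace ℝ (Fin d))
    (hyle : ∀ n, yseq n ≤ y₀)
    (hyseq : Tendsto yseq atTop (𝓝 y₀)) (hzseq : Tendsto zseq atTop (𝓝 z₀)) :
    Tendsto (fun n : ℕ => gq d C α g n (yseq n) (zseq n)) atTop (𝓝 (g y₀ z₀)) := by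
  obtain ⟨hα0, hα1⟩ := hα
  have hα1' : α ≤ 1 := hα1.le
  have hpen : ∀ (y : ℝ) (z : EuclideanSpace ℝ (Fin d)) (p : ℚ × (Fin d → ℚ)),
      0 ≤ |y - (p.1 : ℝ)| + ‖z - qcast d p.2‖ ^ α := fun y z p =>
    add_nonneg (abs_nonneg _) (Real.rpow_nonneg (norm_nonneg _) _)
  -- boundedness below of the infimum family for n ≥ 1
  have hbdd : ∀ n : ℕ, 1 ≤ n → ∀ (y : ℝ) (z : EuclideanSpace ℝ (Fin d)),
      BddBelow (Set.range (fun p : ℚ × (Fin d → ℚ) =>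
        g (p.1 : ℝ) (qcast d p.2) + (n : ℝ) * C * (|y - (p.1 : ℝ)| + ‖z - qcast d p.2‖ ^ α))) := by
    intro n hn y z
    refine ⟨-(f + C * (|y| + ‖z‖ ^ α)), ?_⟩
    rintro x ⟨p, rfl⟩
    have h := term_ge d hC hα0 hα1' g H5 n y z p
    have hn1 : (1 : ℝ) ≤ (n : ℝ) := by exact_mod_cast hn
    have h0 : 0 ≤ ((n : ℝ) - 1) * C * (|y - (p.1 : ℝ)| + ‖z - qcast d p.2‖ ^ α) :=
      mul_nonneg (mul_nonneg (by linarith) hC.le) (hpen y z p)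
    simp only at h ⊢
    linarith
  -- the approximating sequence
  set εs : ℕ → ℝ := fun n => (((n : ℝ) + 1) ^ 2)⁻¹ with hεs
  have hεpos : ∀ n, 0 < εs n := fun n => by positivity
  have hε0 : Tendsto εs atTop (𝓝 0) := by
    apply squeeze_zero (fun n => (hεpos n).le) (fun n => ?_)
      tendsto_one_div_add_atTop_nhds_zero_nat
    rw [hεs, one_div]
    apply inv_anti₀ (by positivity)
    nlinarith [Nat.cast_nonneg (α := ℝ) n]
  choose u hu1 hu2 using fun n => exists_rat_btwn (show yseq n - εs n < yseq n by
    linarith [hεpos n])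
  choose v hv using fun n => qdense d (zseq n)
    (lt_min (hεpos n) (Real.rpow_pos_of_pos (hεpos n) α⁻¹))
  have hvε : ∀ n, ‖zseq n - qcast d (v n)‖ < εs n :=
    fun n => lt_of_lt_of_le (hv n) (min_le_left _ _)
  have hvα : ∀ n, ‖zseq n - qcast d (v n)‖ ^ α < εs n := by
    intro n
    have h1 : ‖zseq n - qcast d (v n)‖ < εs n ^ α⁻¹ :=
      lt_of_lt_of_le (hv n) (min_le_right _ _)
    have h2 := Real.rpow_lt_rpow (norm_nonneg _) h1 hα0
    rwa [← Real.rpow_mul (hεpos n).le, inv_mul_cancel₀ hα0.ne', Real.rpow_one] at h2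
  have hut : Tendsto (fun n => ((u n : ℝ))) atTop (𝓝 y₀) := by
    refine tendsto_of_tendsto_of_tendsto_of_le_of_le ?_ hyseq
      (fun n => (hu1 n).le) (fun n => (hu2 n).le)
    simpa using hyseq.sub hε0
  have hw0 : Tendsto (fun n => zseq n - qcast d (v n)) atTop (𝓝 0) :=
    squeeze_zero_norm (fun n => (hvε n).le) hε0
  have hqt : Tendsto (fun n => qcast d (v n)) atTop (𝓝 z₀) := by
    have h := hzseq.sub hw0
    rw [sub_zero] at h
    have heq : (fun n => zseq n - (zseq n - qcast d (v n))) = fun n => qcast d (v n) := by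
      funext n; rw [sub_sub_cancel]
    rwa [heq] at h
  have hgu : Tendsto (fun n => g (u n) (qcast d (v n))) atTop (𝓝 (g y₀ z₀)) := by
    have hmap : Tendsto (fun n : ℕ => (((u n : ℝ)), qcast d (v n))) atTop
        (𝓝[{p : ℝ × EuclideanSpace ℝ (Fin d) | p.1 ≤ y₀}] (y₀, z₀)) := by
      rw [tendsto_nhdsWithin_iff]
      refine ⟨hut.prodMk_nhds hqt, Filter.Eventually.of_forall fun n => ?_⟩
      exact le_trans (hu2 n).le (hyle n)
    exact (H1a_i y₀ z₀).comp hmap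
  set pen : ℕ → ℝ := fun n =>
    (n : ℝ) * C * (|yseq n - (u n : ℝ)| + ‖zseq n - qcast d (v n)‖ ^ α) with hpendef
  have hpent : Tendsto pen atTop (𝓝 0) := by
    have hb : Tendsto (fun n : ℕ => 2 * C * (1 / ((n : ℝ) + 1))) atTop (𝓝 0) := by
      simpa using tendsto_one_div_add_atTop_nhds_zero_nat.const_mul (2 * C)
    apply squeeze_zero (fun n => mul_nonneg (mul_nonneg (Nat.cast_nonneg n) hC.le)
      (hpen (yseq n) (zseq n) (u n, v n))) (fun n => ?_) hb
    have hA : |yseq n - (u n : ℝ)| ≤ εs n := by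
      rw [abs_le]; constructor <;> [linarith [hu2 n, hεpos n]; linarith [hu1 n]]
    have hB := (hvα n).le
    have hstep : pen n ≤ (n : ℝ) * C * (2 * εs n) := by
      apply mul_le_mul_of_nonneg_left _ (mul_nonneg (Nat.cast_nonneg n) hC.le)
      linarith
    refine le_trans hstep ?_
    rw [hεs]
    rw [div_eq_mul_inv, one_mul]
    have hkey : (n : ℝ) * ((( n : ℝ) + 1) ^ 2)⁻¹ ≤ (((n : ℝ)) + 1)⁻¹ := by
      have heq : (n : ℝ) * ((((n : ℝ)) + 1) ^ 2)⁻¹ = (n : ℝ) / (((n : ℝ)) + 1) ^ 2 :=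
        (div_eq_mul_inv _ _).symm
      rw [heq, ← one_div, div_le_div_iff₀ (by positivity) (by positivity)]
      nlinarith [Nat.cast_nonneg (α := ℝ) n]
    nlinarith [hC.le, hkey, Nat.cast_nonneg (α := ℝ) n]
  set aseq : ℕ → ℝ := fun n => g (u n) (qcast d (v n)) + pen n with haseq
  have hat : Tendsto aseq atTop (𝓝 (g y₀ z₀)) := by
    simpa using hgu.add hpent
  -- main estimate
  rw [Metric.tendsto_atTop]
  intro ε hε
  have hε2 : 0 < ε / 2 := by positivity
  obtain ⟨δ, hδ, hlsc⟩ := lsc_at d hC hα0 g H5 y₀ z₀ (H1a_i y₀ z₀) (H1a_ii y₀ z₀) hε2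
  set η := min (δ / 2) ((δ / 2) ^ α) with hηdef
  have hηpos : 0 < η := lt_min (by positivity) (Real.rpow_pos_of_pos (by positivity) _)
  set M := f + C * ((|y₀| + 1) + (‖z₀‖ + 1) ^ α) with hMdef
  have e1 : ∀ᶠ n in atTop, dist (yseq n) y₀ < min (δ / 2) 1 :=
    hyseq.eventually (Metric.eventually_nhds_iff.mpr
      ⟨min (δ / 2) 1, lt_min (by positivity) one_pos, fun _ h => h⟩)
  have e2 : ∀ᶠ n in atTop, dist (zseq n) z₀ < min (δ / 2) 1 :=
    hzseq.eventually (Metric.eventually_nhds_iff.mpr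
      ⟨min (δ / 2) 1, lt_min (by positivity) one_pos, fun _ h => h⟩)
  have e3 : ∀ᶠ n in atTop, aseq n < g y₀ z₀ + ε / 2 :=
    hat.eventually (eventually_lt_nhds (by linarith))
  have e4 : ∀ᶠ n in atTop, 1 ≤ n := eventually_ge_atTop 1
  have e6 : ∀ᶠ n : ℕ in atTop, M + |g y₀ z₀| ≤ ((n : ℝ) - 1) * (C * η) := by
    have h1 : Tendsto (fun n : ℕ => (n : ℝ) - 1) atTop atTop := by
      simpa [sub_eq_add_neg] using
        tendsto_atTop_add_const_right atTop (-1 : ℝ) tendsto_natCast_atTop_atTop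
    exact (h1.atTop_mul_const (mul_pos hC hηpos)).eventually_ge_atTop _
  obtain ⟨N, hN⟩ := Filter.eventually_atTop.mp ((((e1.and e2).and e3).and e4).and e6)
  refine ⟨N, fun n hn => ?_⟩
  obtain ⟨⟨⟨⟨hd1, hd2⟩, ha3⟩, hn1⟩, hn6⟩ := hN n hn
  have hn1' : (1 : ℝ) ≤ (n : ℝ) := by exact_mod_cast hn1
  have hyd : |yseq n - y₀| < δ / 2 := lt_of_lt_of_le (by rw [← Real.dist_eq]; exact hd1)
    (min_le_left _ _)
  have hzd : ‖zseq n - z₀‖ < δ / 2 := lt_of_lt_of_le (by rw [← dist_eq_norm]; exact hd2)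
    (min_le_left _ _)
  have hy1 : |yseq n| ≤ |y₀| + 1 := by
    have h := abs_add_le (yseq n - y₀) y₀
    rw [sub_add_cancel] at h
    have : |yseq n - y₀| ≤ 1 := le_of_lt (lt_of_lt_of_le
      (by rw [← Real.dist_eq]; exact hd1) (min_le_right _ _))
    linarith
  have hz1 : ‖zseq n‖ ≤ ‖z₀‖ + 1 := by
    have h := norm_add_le (zseq n - z₀) z₀
    rw [sub_add_cancel] at h
    have : ‖zseq n - z₀‖ ≤ 1 := le_of_lt (lt_of_lt_of_le
      (by rw [← dist_eq_norm]; exact hd2) (min_le_right _ _))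
    linarith
  have hMn : f + C * (|yseq n| + ‖zseq n‖ ^ α) ≤ M := by
    rw [hMdef]
    have h2 : ‖zseq n‖ ^ α ≤ (‖z₀‖ + 1) ^ α :=
      Real.rpow_le_rpow (norm_nonneg _) hz1 hα0.le
    have := mul_le_mul_of_nonneg_left (add_le_add hy1 h2) hC.le
    linarith
  -- upper bound: gq ≤ aseq
  have hub : gq d C α g n (yseq n) (zseq n) ≤ aseq n := by
    rw [gq]
    exact ciInf_le (hbdd n hn1 (yseq n) (zseq n)) ((u n, v n) : ℚ × (Fin d → ℚ))
  -- lower bound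
  have hlb : g y₀ z₀ - ε / 2 ≤ gq d C α g n (yseq n) (zseq n) := by
    rw [gq]
    refine le_ciInf fun p => ?_
    set A := |yseq n - (p.1 : ℝ)| with hAdef
    set B := ‖zseq n - qcast d p.2‖ ^ α with hBdef
    have hA0 : 0 ≤ A := abs_nonneg _
    have hB0 : 0 ≤ B := Real.rpow_nonneg (norm_nonneg _) _
    by_cases hcase : A + B < η
    · have hA : A < δ / 2 := by
        have := lt_of_lt_of_le hcase (min_le_left _ _); linarith
      have hBα : B < (δ / 2) ^ α := by
        have := lt_of_lt_of_le hcase (min_le_right _ _); linarith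
      have hB : ‖zseq n - qcast d p.2‖ < δ / 2 := by
        by_contra hcon
        push_neg at hcon
        have := Real.rpow_le_rpow (by positivity) hcon hα0.le
        rw [← hBdef] at this
        linarith
      have hdist : dist (((p.1 : ℝ), qcast d p.2) : ℝ × EuclideanSpace ℝ (Fin d))
          (y₀, z₀) < δ := by
        rw [Prod.dist_eq, max_lt_iff]
        constructor
        · rw [Real.dist_eq]
          have h := abs_sub_le ((p.1 : ℝ)) (yseq n) y₀
          rw [abs_sub_comm (p.1 : ℝ) (yseq n)] at h
          calc |(p.1 : ℝ) - y₀| ≤ A + |yseq n - y₀| := h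
            _ < δ := by linarith
        · rw [dist_eq_norm]
          have h := norm_sub_le_norm_sub_add_norm_sub (qcast d p.2) (zseq n) z₀
          rw [norm_sub_rev (qcast d p.2) (zseq n)] at h
          calc ‖qcast d p.2 - z₀‖ ≤ ‖zseq n - qcast d p.2‖ + ‖zseq n - z₀‖ := h
            _ < δ := by linarith
      have hg := hlsc _ hdist
      simp only at hg
      have hp0 : 0 ≤ (n : ℝ) * C * (A + B) :=
        mul_nonneg (mul_nonneg (Nat.cast_nonneg n) hC.le) (by linarith)
      linarith
    · push_neg at hcase
      have h := term_ge d hC hα0 hα1' g H5 n (yseq n) (zseq n) p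
      rw [← hAdef, ← hBdef] at h
      have h2 : ((n : ℝ) - 1) * (C * η) ≤ ((n : ℝ) - 1) * C * (A + B) := by
        rw [mul_assoc ((n : ℝ) - 1) C (A + B)]
        exact mul_le_mul_of_nonneg_left (by nlinarith [hC.le]) (by linarith)
      have h3 : g y₀ z₀ ≤ |g y₀ z₀| := le_abs_self _
      nlinarith [hC.le, mul_le_mul_of_nonneg_left hcase hC.le]
  rw [Real.dist_eq, abs_sub_lt_iff]
  have h1 : gq d C α g n (yseq n) (zseq n) < g y₀ z₀ + ε / 2 := lt_of_le_of_lt hub ha3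
  constructor
  · linarith [h1, hε]
  · linarith [hlb, hε]
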